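/- arXiv:2605.11908 — 8 statements merged into one kernel-verified Lean document; each statement's English description precedes it below -/
import Mathlib

section
/- Polynomial suppression of harmful arms: if U ≤ −Δ/2 for some Δ > 0, η > 0, and π ∈ (0,1], then σ(U·(−log π)/η)·π ≤ π^(1 + Δ/(2η)). -/
/-- Polynomial suppression of harmful arms:
if `U ≤ -Δ/2` with `Δ > 0`, `η > 0`, `π ∈ (0,1]`, then
`σ(U·(−log π)/η)·π ≤ π^(1 + Δ/(2η))`. -/
theorem polynomial_suppression (U π η Δ : ℝ) (hΔ : 0 < Δ) (hU : U ≤ -Δ/2)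
    (hπ0 : 0 < π) (hπ1 : π ≤ 1) (hη : 0 < η) :
    (1 / (1 + Real.exp (-(U * (-Real.log π) / η)))) * π
      ≤ π ^ (1 + Δ / (2 * η)) := by
  set x := U * (-Real.log π) / η with hx
  have hlog : Real.log π ≤ 0 := Real.log_nonpos hπ0.le hπ1
  -- step 1: sigmoid ≤ exp
  have h1 : 1 / (1 + Real.exp (-x)) ≤ Real.exp x := by
    rw [div_le_iff₀ (by positivity)]
    have : Real.exp x * Real.exp (-x) = 1 := by
      rw [← Real.exp_add]; simp
    nlinarith [Real.exp_pos x, Real.exp_pos (-x)]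
  -- step 2: x ≤ (Δ/(2η)) * log π
  have h2 : x ≤ Δ / (2 * η) * Real.log π := by
    rw [hx, div_le_iff₀ hη]
    have : U * (-Real.log π) ≤ (-Δ/2) * (-Real.log π) := by
      apply mul_le_mul_of_nonneg_right hU (by linarith)
    calc U * (-Real.log π) ≤ (-Δ/2) * (-Real.log π) := this
      _ = Δ / (2 * η) * Real.log π * η := by field_simp
  have h3 : Real.exp x ≤ π ^ (Δ / (2 * η)) := by
    rw [Real.rpow_def_of_pos hπ0]
    exact Real.exp_le_exp.mpr (by linarith [h2] <;> ring_nf)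
  have h4 : (1 / (1 + Real.exp (-x))) * π ≤ π ^ (Δ / (2 * η)) * π := by
    exact mul_le_mul_of_nonneg_right (h1.trans h3) hπ0.le
  calc (1 / (1 + Real.exp (-x))) * π ≤ π ^ (Δ / (2 * η)) * π := h4
    _ = π ^ (1 + Δ / (2 * η)) := by
      rw [Real.rpow_add hπ0, Real.rpow_one]; ring
end

section
/- Covariance identity for exponential reweighting: for a policy π on Fin K with ∑_i π(i)·U(i) = 0, gated advantage f(i) = max(U(i), 0), step size η > 0, new policy π'(i) = π(i)·exp(η·f(i))/Z with Z = ∑_j π(j)·exp(η·f(j)), the value change satisfies ∑_i (π'(i) − π(i))·r(i) = (1/Z)·∑_{i : U(i)>0} π(i)·U(i)·(exp(η·U(i)) − 1). -/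
open Finset in
/-- Covariance identity for the EG exponential reweighting. -/
theorem eg_covariance_identity (K : ℕ) (r π : Fin K → ℝ) (η : ℝ) (hη : 0 < η)
    (hπ : ∀ i, 0 < π i) (hsum : ∑ i, π i = 1)
    (U : Fin K → ℝ) (hU : ∀ i, U i = r i - ∑ j, π j * r j)
    (f : Fin K → ℝ) (hf : ∀ i, f i = max (U i) 0)
    (Z : ℝ) (hZ : Z = ∑ j, π j * Real.exp (η * f j))
    (π' : Fin K → ℝ) (hπ' : ∀ i, π' i = π i * Real.exp (η * f i) / Z) :
    ∑ i, (π' i - π i) * r i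
      = (1 / Z) * ∑ i ∈ univ.filter (fun i => 0 < U i),
          π i * U i * (Real.exp (η * U i) - 1) := by
  rcases Nat.eq_zero_or_pos K with hK | hK
  · subst hK; simp
  have : Nonempty (Fin K) := ⟨⟨0, hK⟩⟩
  have hZpos : 0 < Z := by
    rw [hZ]
    exact Finset.sum_pos (fun i _ => mul_pos (hπ i) (Real.exp_pos _))
      Finset.univ_nonempty
  have hZne : Z ≠ 0 := ne_of_gt hZpos
  -- sum of π' is 1
  have hsum' : ∑ i, π' i = 1 := by
    simp only [hπ', div_eq_mul_inv, ← Finset.sum_mul, ← hZ]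
    field_simp
  -- ∑ π U = 0
  have hsumU : ∑ i, π i * U i = 0 := by
    have : ∀ i ∈ Finset.univ, π i * U i
        = π i * r i - π i * (∑ j, π j * r j) := by
      intro i _; rw [hU]; ring
    rw [Finset.sum_congr rfl this, Finset.sum_sub_distrib,
      ← Finset.sum_mul, hsum, one_mul, sub_self]
  -- replace r by U
  have key : ∑ i, (π' i - π i) * r i = ∑ i, π' i * U i := by
    have h1 : ∀ i ∈ Finset.univ, (π' i - π i) * r i
        = (π' i - π i) * U i + (π' i - π i) * (∑ j, π j * r j) := by
      intro i _; rw [hU]; ring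
    rw [Finset.sum_congr rfl h1, Finset.sum_add_distrib, ← Finset.sum_mul,
      Finset.sum_sub_distrib, hsum', hsum, sub_self, zero_mul, add_zero]
    have h2 : ∀ i ∈ Finset.univ, (π' i - π i) * U i
        = π' i * U i - π i * U i := by intro i _; ring
    rw [Finset.sum_congr rfl h2, Finset.sum_sub_distrib, hsumU, sub_zero]
  rw [key]
  have hexpand : ∀ i ∈ Finset.univ, π' i * U i
      = (1 / Z) * (π i * Real.exp (η * f i) * U i) := by
    intro i _; rw [hπ']; ring
  rw [Finset.sum_congr rfl hexpand, ← Finset.mul_sum]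
  congr 1
  rw [← Finset.sum_filter_add_sum_filter_not Finset.univ (fun i => 0 < U i)
    (fun i => π i * Real.exp (η * f i) * U i)]
  have hpos : ∀ i ∈ Finset.univ.filter (fun i => 0 < U i),
      π i * Real.exp (η * f i) * U i
        = π i * U i * (Real.exp (η * U i) - 1) + π i * U i := by
    intro i hi
    rw [Finset.mem_filter] at hi
    rw [hf, max_eq_left hi.2.le]; ring
  have hneg : ∀ i ∈ Finset.univ.filter (fun i => ¬ 0 < U i),
      π i * Real.exp (η * f i) * U i = π i * U i := by
    intro i hi
    rw [Finset.mem_filter] at hi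
    rw [hf, max_eq_right (not_lt.mp hi.2), mul_zero, Real.exp_zero, mul_one]
  rw [Finset.sum_congr rfl hpos, Finset.sum_congr rfl hneg,
    Finset.sum_add_distrib]
  have : ∑ i ∈ Finset.univ.filter (fun i => 0 < U i), π i * U i
      + ∑ i ∈ Finset.univ.filter (fun i => ¬ 0 < U i), π i * U i = 0 := by
    rw [Finset.sum_filter_add_sum_filter_not]; exact hsumU
  linarith
end

section
/- Discrete monotonicity of EG in bandits: under the EG update π'(i) = π(i)·exp(η·max(U(i),0))/Z, the expected reward is non-decreasing: ∑_i π'(i)·r(i) ≥ ∑_i π(i)·r(i), for any η > 0. -/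
/-- Discrete monotonicity of EG in bandits. -/
theorem eg_monotonic (K : ℕ) (r π : Fin K → ℝ) (η : ℝ) (hη : 0 < η)
    (hπ : ∀ i, 0 < π i) (hsum : ∑ i, π i = 1)
    (U : Fin K → ℝ) (hU : ∀ i, U i = r i - ∑ j, π j * r j)
    (Z : ℝ) (hZ : Z = ∑ j, π j * Real.exp (η * max (U j) 0))
    (π' : Fin K → ℝ) (hπ' : ∀ i, π' i = π i * Real.exp (η * max (U i) 0) / Z) :
    ∑ i, π i * r i ≤ ∑ i, π' i * r i := by
  rcases Nat.eq_zero_or_pos K with hK | hK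
  · subst hK; simp
  have : Nonempty (Fin K) := ⟨⟨0, hK⟩⟩
  set m := ∑ j, π j * r j with hm
  set e : Fin K → ℝ := fun i => Real.exp (η * max (U i) 0) with he
  have hZpos : 0 < Z := by
    rw [hZ]
    exact Finset.sum_pos (fun j _ => mul_pos (hπ j) (Real.exp_pos _)) Finset.univ_nonempty
  have h0 : ∑ i, π i * U i = 0 := by
    have : ∀ i, π i * U i = π i * r i - π i * m := by
      intro i; rw [hU i, mul_sub]
    simp only [this]
    rw [Finset.sum_sub_distrib, ← Finset.sum_mul, hsum, one_mul, sub_self]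
  have key : 0 ≤ ∑ i, π i * e i * U i := by
    have hsplit : ∀ i, π i * e i * U i = π i * U i + π i * ((e i - 1) * U i) := by
      intro i; ring
    rw [Finset.sum_congr rfl (fun i _ => hsplit i), Finset.sum_add_distrib, h0, zero_add]
    refine Finset.sum_nonneg fun i _ => mul_nonneg (hπ i).le ?_
    rcases le_or_gt (U i) 0 with h | h
    · have : max (U i) 0 = 0 := max_eq_right h
      simp [he, this, Real.exp_zero]
    · have hmax : max (U i) 0 = U i := max_eq_left h.le
      have : (1:ℝ) ≤ e i := by
        rw [he]; simp only
        rw [hmax]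
        exact Real.one_le_exp (by positivity)
      nlinarith
  have hZm : ∑ i, π i * e i * m = Z * m := by
    rw [hZ, Finset.sum_mul]
  have keyr : Z * m ≤ ∑ i, π i * e i * r i := by
    have : ∑ i, π i * e i * U i = (∑ i, π i * e i * r i) - Z * m := by
      rw [← hZm, ← Finset.sum_sub_distrib]
      refine Finset.sum_congr rfl fun i _ => ?_
      rw [hU i]; ring
    linarith [key, this.symm ▸ key]
  have : ∑ i, π' i * r i = (∑ i, π i * e i * r i) / Z := by
    rw [Finset.sum_div]
    refine Finset.sum_congr rfl fun i _ => ?_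
    rw [hπ' i]; ring
  rw [this, le_div_iff₀ hZpos]
  linarith [keyr]
end

section
/- Sign-preserving monotonicity of DG: let w : Fin K → ℝ satisfy w(i) > 0 for all i, set g(i) = α·w(i)·U(i) with α > 0, and π'(i) = π(i)·exp(g(i))/Z with Z = ∑_j π(j)·exp(g(j)). Then ∑_i π'(i)·r(i) ≥ ∑_i π(i)·r(i), since each term π(i)·U(i)·(exp(g(i)) − 1) is non-negative. -/
/-- Sign-preserving monotonicity of DG: with strictly positive
gate weights `w` and step size `α > 0`, the exponential reweighting
`π'(i) = π(i)·exp(α·w(i)·U(i))/Z` does not decrease the expected reward,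
and each term `π(i)·U(i)·(exp(g(i)) − 1)` is non-negative. -/
theorem dg_monotonic (K : ℕ) (r π w : Fin K → ℝ) (α : ℝ) (hα : 0 < α)
    (hπ : ∀ i, 0 < π i) (hsum : ∑ i, π i = 1) (hw : ∀ i, 0 < w i)
    (U : Fin K → ℝ) (hU : ∀ i, U i = r i - ∑ j, π j * r j)
    (g : Fin K → ℝ) (hg : ∀ i, g i = α * w i * U i)
    (Z : ℝ) (hZ : Z = ∑ j, π j * Real.exp (g j))
    (π' : Fin K → ℝ) (hπ' : ∀ i, π' i = π i * Real.exp (g i) / Z) :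
    (∀ i, 0 ≤ π i * U i * (Real.exp (g i) - 1)) ∧
      ∑ i, π i * r i ≤ ∑ i, π' i * r i := by
  have hterm : ∀ i, 0 ≤ π i * U i * (Real.exp (g i) - 1) := by
    intro i
    rcases le_or_gt 0 (U i) with h | h
    · have hge : (0:ℝ) ≤ g i := by
        rw [hg]; exact mul_nonneg (mul_nonneg hα.le (hw i).le) h
      have h1 := Real.one_le_exp hge
      exact mul_nonneg (mul_nonneg (hπ i).le h) (by linarith)
    · have hgneg : g i ≤ 0 := by
        rw [hg]
        have := mul_pos hα (hw i)
        nlinarith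
      have hle : Real.exp (g i) ≤ 1 := Real.exp_le_one_iff.mpr hgneg
      have h2 : 0 ≤ (-U i) * (1 - Real.exp (g i)) :=
        mul_nonneg (by linarith) (by linarith)
      nlinarith [(hπ i).le]
  refine ⟨hterm, ?_⟩
  have hK : 0 < K := by
    rcases Nat.eq_zero_or_pos K with h | h
    · subst h; simp at hsum
    · exact h
  have : Nonempty (Fin K) := ⟨⟨0, hK⟩⟩
  have hZpos : 0 < Z := by
    rw [hZ]
    exact Finset.sum_pos (fun i _ => mul_pos (hπ i) (Real.exp_pos _))
      Finset.univ_nonempty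
  have hUsum : ∑ i, π i * U i = 0 := by
    have : ∑ i, π i * U i
        = ∑ i, π i * r i - (∑ i, π i) * (∑ j, π j * r j) := by
      rw [Finset.sum_mul, ← Finset.sum_sub_distrib]
      exact Finset.sum_congr rfl fun i _ => by rw [hU i]; ring
    rw [this, hsum]; ring
  have hS : ∑ i, π' i * r i = (∑ i, π i * Real.exp (g i) * r i) / Z := by
    rw [Finset.sum_div]
    exact Finset.sum_congr rfl fun i _ => by rw [hπ' i]; ring
  rw [hS, le_div_iff₀ hZpos]
  have key : ∑ i, π i * Real.exp (g i) * r i - Z * (∑ j, π j * r j)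
      = ∑ i, π i * U i * (Real.exp (g i) - 1) + ∑ i, π i * U i := by
    rw [hZ, Finset.sum_mul, ← Finset.sum_add_distrib, ← Finset.sum_sub_distrib]
    exact Finset.sum_congr rfl fun i _ => by rw [hU i]; ring
  have h1 : 0 ≤ ∑ i, π i * U i * (Real.exp (g i) - 1) :=
    Finset.sum_nonneg fun i _ => hterm i
  linarith [key, h1, hUsum]
end

section
/- EG sector bound (general K): fix a sub-optimal corner arm j ≠ 1 in a K-armed bandit with r(1) > r(j). Write ε = 1 − π(j) and suppose π(1) ≥ ε/K. There exists ε₀ > 0, depending only on the reward gaps and K, such that for all ε ∈ (0, ε₀), the EG drift difference satisfies ϑ(1) − ϑ(j) ≥ (r(1)−r(j))·ε/(4K), where ϑ(a) = ∑_{i : U(i)>0} π(i)·U(i)·(𝟙{a=i} − π(a)). -/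
set_option maxHeartbeats 1000000

open Finset

/-- Advantage of arm `i` under policy `π` with rewards `r`. -/
def banditAdv {K : ℕ} (r π : Fin K → ℝ) (i : Fin K) : ℝ :=
  r i - ∑ m, π m * r m

/-- EG drift: gated policy-gradient drift with weights `𝟙{U(i) > 0}`. -/
noncomputable def egDrift {K : ℕ} (r π : Fin K → ℝ) (a : Fin K) : ℝ :=
  ∑ i ∈ univ.filter (fun i => 0 < banditAdv r π i),
    π i * banditAdv r π i * ((if a = i then (1:ℝ) else 0) - π a)

/-- EG sector bound (general K). -/
theorem eg_sector_bound (K : ℕ) (hK : 2 ≤ K) (r : Fin K → ℝ)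
    (hr01 : ∀ i, r i ∈ Set.Icc (0:ℝ) 1)
    (hr : ∀ i j : Fin K, i < j → r j < r i)
    (j : Fin K) (hj : j ≠ ⟨0, by omega⟩) :
    ∃ ε₀ > (0:ℝ), ∀ π : Fin K → ℝ, (∀ i, 0 < π i) → (∑ i, π i) = 1 →
      ∀ ε : ℝ, ε = 1 - π j → 0 < ε → ε < ε₀ →
        π ⟨0, by omega⟩ ≥ ε / K →
        egDrift r π ⟨0, by omega⟩ - egDrift r π j
          ≥ (r ⟨0, by omega⟩ - r j) * ε / (4 * K) := by
  set i0 : Fin K := ⟨0, by omega⟩ with hi0def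
  have hKR : (0:ℝ) < K := by positivity
  have hK2R : (2:ℝ) ≤ K := by exact_mod_cast hK
  have hjval : j.val ≠ 0 := fun h => hj (Fin.ext h)
  have hi0val : i0.val = 0 := rfl
  have hi0j : i0 < j := by rw [Fin.lt_def]; omega
  have hji0 : j ≠ i0 := fun h => absurd h hj
  have hΔpos : (0:ℝ) < r i0 - r j := by have := hr i0 j hi0j; linarith
  set Δ : ℝ := r i0 - r j with hΔdef
  refine ⟨Δ / (8 * K), by positivity, ?_⟩
  intro π hπpos hπsum ε hε hεpos hεlt hπ0
  -- basic bounds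
  have hr0le : r i0 ≤ 1 := (hr01 i0).2
  have hrj0 : 0 ≤ r j := (hr01 j).1
  have hΔ1 : Δ ≤ 1 := by simp only [hΔdef]; linarith
  have hε8K : ε * (8 * K) < Δ := by
    have := (lt_div_iff₀ (by positivity : (0:ℝ) < 8 * K)).mp hεlt
    linarith
  have hε16 : 16 * ε ≤ Δ := by nlinarith
  have hεK : ε ≤ π i0 * K := (div_le_iff₀ hKR).mp hπ0
  -- sum facts
  have hsum_erase : ∑ m ∈ univ.erase j, π m = ε := by
    have h := Finset.sum_erase_add univ π (mem_univ j)
    rw [hπsum] at h; linarith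
  have hπ0ε : π i0 ≤ ε := by
    rw [← hsum_erase]
    exact Finset.single_le_sum (fun i _ => (hπpos i).le)
      (Finset.mem_erase.mpr ⟨Ne.symm hji0, mem_univ i0⟩)
  have hπj1 : π j ≤ 1 := by
    rw [← hπsum]
    exact Finset.single_le_sum (fun i _ => (hπpos i).le) (mem_univ j)
  -- mean reward bounds
  set rbar : ℝ := ∑ m, π m * r m with hrbar
  have hrbar_ge : π j * r j ≤ rbar := by
    apply Finset.single_le_sum (f := fun m => π m * r m)
      (fun i _ => mul_nonneg (hπpos i).le (hr01 i).1) (mem_univ j)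
  have hrbar_le : rbar ≤ π j * r j + ε := by
    have h : ∑ m ∈ univ.erase j, π m * r m + π j * r j = rbar := by
      rw [hrbar]; exact Finset.sum_erase_add _ _ (mem_univ j)
    have h2 : ∑ m ∈ univ.erase j, π m * r m ≤ ∑ m ∈ univ.erase j, π m :=
      Finset.sum_le_sum (fun i _ => by
        nlinarith [(hπpos i).le, (hr01 i).1, (hr01 i).2])
    rw [hsum_erase] at h2
    simp only [hrbar]
    linarith [h, h2]
  have hUj_le : banditAdv r π j ≤ ε := by
    simp only [banditAdv, ← hrbar]
    nlinarith
  have hU0_ge : Δ ≤ 2 * banditAdv r π i0 := by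
    simp only [banditAdv, ← hrbar]
    nlinarith
  have hU0pos : 0 < banditAdv r π i0 := by nlinarith
  -- the gated set and total positive advantage mass
  set F := univ.filter (fun i => 0 < banditAdv r π i) with hF
  have hi0F : i0 ∈ F := by
    simp only [hF, mem_filter, mem_univ, true_and]; exact hU0pos
  set S : ℝ := ∑ i ∈ F, π i * banditAdv r π i with hS
  have hSnonneg : 0 ≤ S := by
    apply Finset.sum_nonneg
    intro i hi
    have : 0 < banditAdv r π i := (mem_filter.mp hi).2
    exact le_of_lt (mul_pos (hπpos i) this)
  -- drift formula
  have hdrift : ∀ a, egDrift r π a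
      = (if a ∈ F then π a * banditAdv r π a else 0) - π a * S := by
    intro a
    unfold egDrift
    rw [← hF]
    have : ∀ i ∈ F, π i * banditAdv r π i * ((if a = i then (1:ℝ) else 0) - π a)
        = (if a = i then π i * banditAdv r π i else 0) - π i * banditAdv r π i * π a := by
      intro i _
      by_cases h : a = i <;> simp [h] <;> ring
    rw [Finset.sum_congr rfl this, Finset.sum_sub_distrib, Finset.sum_ite_eq]
    rw [hS, ← Finset.sum_mul]
    by_cases haF : a ∈ F <;> simp [haF] <;> ring
  have hπjπ0 : π i0 ≤ π j := by linarith [hπ0ε]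
  -- key inequality
  have hkey : egDrift r π i0 - egDrift r π j
      ≥ π i0 * banditAdv r π i0 - ε * (2 * ε) := by
    rw [hdrift i0, hdrift j, if_pos hi0F]
    by_cases hjF : j ∈ F
    · rw [if_pos hjF]
      have hUjpos : 0 < banditAdv r π j := (mem_filter.mp hjF).2
      have hSgej : π j * banditAdv r π j ≤ S := by
        rw [hS]
        exact Finset.single_le_sum (f := fun i => π i * banditAdv r π i)
          (fun i hi => (mul_pos (hπpos i) (mem_filter.mp hi).2).le) hjF
      have hpU : 0 ≤ π j * banditAdv r π j := (mul_pos (hπpos j) hUjpos).le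
      have hpUε : π j * banditAdv r π j ≤ ε := by nlinarith [(hπpos j).le]
      have h1 : (π j - π i0) * (π j * banditAdv r π j) ≤ (π j - π i0) * S :=
        mul_le_mul_of_nonneg_left hSgej (by linarith)
      have hπ0pos := hπpos i0
      nlinarith [h1]
    · rw [if_neg hjF]
      have : 0 ≤ (π j - π i0) * S := mul_nonneg (by linarith) hSnonneg
      nlinarith [mul_pos hεpos hεpos]
  -- finish
  have hgoal : Δ * ε / (4 * K) ≤ π i0 * banditAdv r π i0 - ε * (2 * ε) := by
    rw [div_le_iff₀ (by positivity : (0:ℝ) < 4 * K)]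
    have h1 : Δ * ε ≤ (2 * banditAdv r π i0) * (π i0 * K) :=
      mul_le_mul hU0_ge hεK hεpos.le (by linarith)
    have h2 : (ε * (8 * K)) * ε ≤ Δ * ε :=
      mul_le_mul_of_nonneg_right hε8K.le hεpos.le
    nlinarith [h1, h2]
  linarith [hkey, hgoal]
end

section
/- EG interior fixed point in the shared-parameter counterexample: with p = σ(θ), the EG drift (keeping only positive-advantage terms, i.e., action a₁ at s₁ and action a₀ at s₂) equals F_EG(θ) = 5·p·(1−p)·(1 − 11p). Its unique root in (0,1) is p* = 1/11, and the derivative of F_EG with respect to p at p = 1/11 equals −50/11 < 0, so p* is a stable fixed point. -/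
/-- EG drift in the shared-parameter counterexample, as a function of
`p = σ(θ)`: keep only the positive-advantage terms
`G_{s₁} = p·10(1−p)·(1−p)` and `G_{s₂} = (1−p)·100p·(−p)`. -/
noncomputable def Feg (p : ℝ) : ℝ :=
  (1/2) * (p * (10 * (1 - p)) * (1 - p) + (1 - p) * (100 * p) * (-p))

lemma Feg_eq : Feg = fun p : ℝ => 5*p - 60*p^2 + 55*p^3 := by
  funext p; unfold Feg; ring

lemma Feg_hasDeriv (p : ℝ) :
    HasDerivAt Feg (5 - 120*p + 165*p^2) p := by
  rw [Feg_eq]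
  have h := (((hasDerivAt_id p).const_mul 5).sub
      (((hasDerivAt_pow 2 p)).const_mul 60)).add
      (((hasDerivAt_pow 3 p)).const_mul 55)
  exact h.congr_deriv (by push_cast; ring)

/-- EG interior fixed point in the shared-parameter
counterexample: `F_EG(p) = 5p(1−p)(1−11p)`, whose unique root in `(0,1)` is
`p* = 1/11`, with `F_EG'(1/11) = −50/11 < 0` (stable fixed point). -/
theorem eg_counterexample_fixed_point :
    (∀ p : ℝ, Feg p = 5 * p * (1 - p) * (1 - 11 * p))
    ∧ (∀ p ∈ Set.Ioo (0:ℝ) 1, Feg p = 0 ↔ p = 1/11)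
    ∧ deriv Feg (1/11) = -50/11
    ∧ (-50/11 : ℝ) < 0 := by
  refine ⟨fun p => by unfold Feg; ring, ?_, ?_, by norm_num⟩
  · rintro p ⟨hp0, hp1⟩
    unfold Feg
    constructor
    · intro h
      have hfac : p * ((1 - p) * (1 - 11 * p)) = 0 := by nlinarith [h]
      rcases mul_eq_zero.1 hfac with h1 | h2
      · linarith
      rcases mul_eq_zero.1 h2 with h1 | h2
      · linarith
      · linarith
    · intro h; subst h; norm_num
  · rw [(Feg_hasDeriv (1/11)).deriv]; norm_num
end

section
/- Corner dominance decomposition for EG: in a K-armed bandit with optimal arm 1 and corner arm j, writing Δ_{ab} = r(a) − r(b), the EG logit-update difference satisfies Δθ(1) − Δθ(j) = Δ_{1j}·C_{1j} + ∑_{k≠1,j} Δ_{jk}·C_{jk}, where C_{1j} = π(1)·[(1−π(1))² + π(j)·(2−π(j))] and C_{jk} = π(k)·(π(1) − π(j))·∑_{m≠1,j} π(m), under the identity Δθ(1) − Δθ(j) = π(1)·U(1)·(1+π(j)−π(1)) − π(j)·U(j)·(1+π(1)−π(j)) with U(1) = (1−π(1))·Δ_{1j} − ∑_{k≠1,j}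 π(k)·Δ_{kj} and U(j) = −π(1)·Δ_{1j} − ∑_{k≠1,j} π(k)·Δ_{kj}. -/
open Finset

/-- Corner dominance decomposition for EG:
`Δθ(1) − Δθ(j) = Δ_{1j}·C_{1j} + ∑_{k≠1,j} Δ_{jk}·C_{jk}`. -/
theorem corner_dominance_decomposition (K : ℕ) (r π : Fin K → ℝ)
    (a1 j : Fin K) (hne : a1 ≠ j) (hsum : ∑ i, π i = 1) :
    ∀ U1 Uj : ℝ,
      U1 = (1 - π a1) * (r a1 - r j)
            - ∑ k ∈ (univ.erase a1).erase j, π k * (r k - r j) →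
      Uj = -(π a1) * (r a1 - r j)
            - ∑ k ∈ (univ.erase a1).erase j, π k * (r k - r j) →
      π a1 * U1 * (1 + π j - π a1) - π j * Uj * (1 + π a1 - π j)
        = (r a1 - r j) * (π a1 * ((1 - π a1) ^ 2 + π j * (2 - π j)))
          + ∑ k ∈ (univ.erase a1).erase j,
              (r j - r k) *
                (π k * (π a1 - π j) * ∑ m ∈ (univ.erase a1).erase j, π m) := by
  intro U1 Uj hU1 hUj
  subst hU1 hUj
  set E := (univ.erase a1).erase j with hE
  have hj : j ∈ univ.erase a1 := mem_erase.2 ⟨hne.symm, mem_univ j⟩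
  have hT : ∑ m ∈ E, π m = 1 - π a1 - π j := by
    have h1 : π a1 + ∑ m ∈ univ.erase a1, π m = 1 := by
      rw [add_sum_erase _ _ (mem_univ a1)]; exact hsum
    have h2 : π j + ∑ m ∈ E, π m = ∑ m ∈ univ.erase a1, π m := by
      rw [hE, add_sum_erase _ _ hj]
    linarith
  have hfac : ∑ k ∈ E, (r j - r k) * (π k * (π a1 - π j) * ∑ m ∈ E, π m)
      = ((π a1 - π j) * (1 - π a1 - π j)) * (-(∑ k ∈ E, π k * (r k - r j))) := by
    rw [mul_neg, mul_sum, ← sum_neg_distrib]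
    exact sum_congr rfl fun k _ => by rw [hT]; ring
  rw [hfac]
  ring
end

section
/- Performance difference with EG reweighting in MDPs: for a tabular MDP with per-state EG update π'(a|s) = π(a|s)·exp(η·max(U_a(s),0))/Z_s, and given the performance difference lemma V(π') − V(π) = (1/(1−γ))·∑_s d^{π'}(s)·∑_a π'(a|s)·U_a(s), each state's inner sum equals (1/Z_s)·∑_{i : U_i(s)>0} π(i|s)·U_i(s)·(exp(η·U_i(s)) − 1) ≥ 0, hence V(π') ≥ V(π). -/
open Finset in
/-- Performance difference with EG reweighting in MDPs:
each state's inner sum in the performance difference lemma equals the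
non-negative covariance expression, hence `V(π') ≥ V(π)`. -/
theorem mdp_eg_monotonic (S A : Type*) [Fintype S] [Fintype A]
    (γ η : ℝ) (hγ : γ ∈ Set.Ico (0:ℝ) 1) (hη : 0 < η)
    (π : S → A → ℝ) (hπpos : ∀ s a, 0 < π s a) (hπsum : ∀ s, ∑ a, π s a = 1)
    (U : S → A → ℝ) (hU0 : ∀ s, ∑ a, π s a * U s a = 0)
    (Z : S → ℝ) (hZ : ∀ s, Z s = ∑ a, π s a * Real.exp (η * max (U s a) 0))
    (π' : S → A → ℝ)
    (hπ' : ∀ s a, π' s a = π s a * Real.exp (η * max (U s a) 0) / Z s)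
    (d : S → ℝ) (hd : ∀ s, 0 ≤ d s)
    (Vdiff : ℝ)
    (hPDL : Vdiff = (1 / (1 - γ)) * ∑ s, d s * ∑ a, π' s a * U s a) :
    (∀ s, ∑ a, π' s a * U s a
        = (1 / Z s) * ∑ a ∈ univ.filter (fun a => 0 < U s a),
            π s a * U s a * (Real.exp (η * U s a) - 1))
    ∧ 0 ≤ Vdiff := by
  have key : ∀ s, ∑ a, π' s a * U s a
      = (1 / Z s) * ∑ a ∈ univ.filter (fun a => 0 < U s a),
          π s a * U s a * (Real.exp (η * U s a) - 1) := by
    intro s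
    have h1 : ∑ a, π' s a * U s a
        = (1 / Z s) * ∑ a, π s a * U s a * Real.exp (η * max (U s a) 0) := by
      rw [Finset.mul_sum]
      refine Finset.sum_congr rfl fun a _ => ?_
      rw [hπ' s a]; ring
    rw [h1]
    congr 1
    have h2 : ∑ a, π s a * U s a * Real.exp (η * max (U s a) 0)
        = ∑ a, π s a * U s a * (Real.exp (η * max (U s a) 0) - 1) := by
      simp only [mul_sub, mul_one]
      rw [Finset.sum_sub_distrib, hU0 s, sub_zero]
    rw [h2]
    rw [← Finset.sum_filter_add_sum_filter_not Finset.univ (fun a => 0 < U s a)]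
    have h3 : ∑ a ∈ Finset.univ.filter (fun a => ¬ 0 < U s a),
        π s a * U s a * (Real.exp (η * max (U s a) 0) - 1) = 0 := by
      refine Finset.sum_eq_zero fun a ha => ?_
      have : max (U s a) 0 = 0 := by
        simp at ha; exact max_eq_right ha
      rw [this]
      simp
    rw [h3, add_zero]
    refine Finset.sum_congr rfl fun a ha => ?_
    have : max (U s a) 0 = U s a := by
      simp at ha; exact max_eq_left ha.le
    rw [this]
  refine ⟨key, ?_⟩
  rw [hPDL]
  apply mul_nonneg
  · have : (0:ℝ) < 1 - γ := by linarith [hγ.2]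
    positivity
  · refine Finset.sum_nonneg fun s _ => mul_nonneg (hd s) ?_
    rw [key s]
    apply mul_nonneg
    · have hZpos : 0 ≤ Z s := by
        rw [hZ s]
        exact Finset.sum_nonneg fun a _ =>
          mul_nonneg (hπpos s a).le (Real.exp_nonneg _)
      positivity
    · refine Finset.sum_nonneg fun a ha => ?_
      simp only [Finset.mem_filter] at ha
      have hU := ha.2
      have : 1 ≤ Real.exp (η * U s a) := by
        rw [Real.one_le_exp_iff]
        positivity
      exact mul_nonneg (mul_nonneg (hπpos s a).le hU.le) (by linarith)
end
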